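/- The map $x \mapsto \Pi_w(gx)$, restricted to $V_0$, preserves Lebesgue measure on $V_0$ for every $g \in \mathbb{H}_n$ and every horizontal $w$ with $y_n(w) = 1$. Consequently $\mu(Q_w(g,r)) = \mu(\delta_r(R_w)) = r^{2n+2}\mu(R_w)/r \approx r^{2n+1}$, i.e., the Lebesgue measure of $Q_w(g,r) = \Pi_w(g\,\delta_r(R_w))$ is comparable to $r^{2n+1}$ independently of $g$. -/

import Mathlib

open scoped BigOperators
noncomputable section

/-- The Heisenberg group `ℍ_n`, as `ℝ^n × ℝ^n × ℝ`. -/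
@[ext]
structure Heis (n : ℕ) where
  x : Fin n → ℝ
  y : Fin n → ℝ
  z : ℝ

namespace Heis

variable {n : ℕ}

/-- The standard symplectic form on `ℝ^{2n}`. -/
def Om (v w : (Fin n → ℝ) × (Fin n → ℝ)) : ℝ :=
  ∑ i, (v.1 i * w.2 i - w.1 i * v.2 i)

/-- The horizontal projection `π : ℍ_n → ℝ^{2n}`. -/
def pr (h : Heis n) : (Fin n → ℝ) × (Fin n → ℝ) := (h.x, h.y)

lemma Om_add_left (x1 x2 y1 y2 : Fin n → ℝ) (w : (Fin n → ℝ) × (Fin n → ℝ)) :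
    Om (x1 + x2, y1 + y2) w = Om (x1, y1) w + Om (x2, y2) w := by
  simp only [Om, Pi.add_apply]
  rw [← Finset.sum_add_distrib]
  exact Finset.sum_congr rfl (fun i _ => by ring)

lemma Om_add_right (v : (Fin n → ℝ) × (Fin n → ℝ)) (x1 x2 y1 y2 : Fin n → ℝ) :
    Om v (x1 + x2, y1 + y2) = Om v (x1, y1) + Om v (x2, y2) := by
  simp only [Om, Pi.add_apply]
  rw [← Finset.sum_add_distrib]
  exact Finset.sum_congr rfl (fun i _ => by ring)

lemma Om_neg_self (x y : Fin n → ℝ) : Om (-x, -y) (x, y) = 0 := by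
  simp only [Om, Pi.neg_apply]
  exact Finset.sum_eq_zero (fun i _ => by ring)

def mul' (g h : Heis n) : Heis n :=
  ⟨g.x + h.x, g.y + h.y, g.z + h.z + Om (pr g) (pr h) / 2⟩

instance : Group (Heis n) where
  mul := mul'
  one := ⟨0, 0, 0⟩
  inv g := ⟨-g.x, -g.y, -g.z⟩
  mul_assoc a b c := by
    show mul' (mul' a b) c = mul' a (mul' b c)
    simp only [mul', pr, Om_add_left, Om_add_right]
    refine Heis.ext ?_ ?_ ?_
    · exact add_assoc _ _ _
    · exact add_assoc _ _ _
    · ring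
  one_mul a := by
    show mul' ⟨0, 0, 0⟩ a = a
    simp only [mul', pr, Om]
    refine Heis.ext ?_ ?_ ?_ <;> simp
  mul_one a := by
    show mul' a ⟨0, 0, 0⟩ = a
    simp only [mul', pr, Om]
    refine Heis.ext ?_ ?_ ?_ <;> simp
  inv_mul_cancel a := by
    show mul' ⟨-a.x, -a.y, -a.z⟩ a = ⟨0, 0, 0⟩
    simp only [mul', pr]
    refine Heis.ext ?_ ?_ ?_
    · simp
    · simp
    · simp [Om_neg_self]

lemma mul_def (g h : Heis n) :
    g * h = ⟨g.x + h.x, g.y + h.y, g.z + h.z + Om (pr g) (pr h) / 2⟩ := rfl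

lemma one_def : (1 : Heis n) = ⟨0, 0, 0⟩ := rfl

lemma inv_def (g : Heis n) : g⁻¹ = ⟨-g.x, -g.y, -g.z⟩ := rfl

/-- The anisotropic dilations `δ_t`. -/
def dil (t : ℝ) (h : Heis n) : Heis n := ⟨t • h.x, t • h.y, t ^ 2 * h.z⟩

/-- The coordinate function `y_n` (the last `y`-coordinate). -/
def yn (h : Heis n) : ℝ := if hn : n = 0 then 0 else h.y ⟨n - 1, by omega⟩

/-- A point of `ℍ_n` is a horizontal vector if its `z`-coordinate vanishes. -/
def IsHoriz (h : Heis n) : Prop := h.z = 0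

/-- The vertical plane `V_0 = {y_n = 0}`. -/
def V0 (n : ℕ) : Set (Heis n) := {h | yn h = 0}

/-- `w^t = δ_t(w)`, for `w` a horizontal vector. -/
def wpow (w : Heis n) (t : ℝ) : Heis n := dil t w

/-- The projection to `V_0` along cosets of `⟨w⟩`: `Π_w(h) = h ⬝ w^{-y_n(h)}`. -/
def Piw (w : Heis n) (h : Heis n) : Heis n := h * wpow w (-(yn h))

/-- `Ω̄(g,h) = Ω(π(g), π(h))`. -/
def Obar (g h : Heis n) : ℝ := Om (pr g) (pr h)

/-- The subgroup `P_w = V_0 ∩ w^{Ω̄}`. -/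
def Pw (w : Heis n) : Set (Heis n) := {h | yn h = 0 ∧ Obar h w = 0}

/-- The horizontal subspace `C_w = A ∩ V_0 ∩ w^Ω`. -/
def Cw (w : Heis n) : Set (Heis n) := {h | h.z = 0 ∧ yn h = 0 ∧ Obar h w = 0}

/-- The Euclidean inner product of the horizontal coordinates. -/
def edot (g h : Heis n) : ℝ := ∑ i, g.x i * h.x i + ∑ i, g.y i * h.y i

/-- The `w`-intrinsic graph of a function `f : V_0 → ℝ`. -/
def graphOf (f : Heis n → ℝ) (w : Heis n) : Set (Heis n) :=
  (fun v => v * wpow w (f v)) '' V0 n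

/-- The vector `Y_n`. -/
def Yvec (n : ℕ) : Heis n := ⟨0, fun i => if (i : ℕ) = n - 1 then 1 else 0, 0⟩

section Metric

variable [MetricSpace (Heis n)]

/-- The open double cone `Cone_λ`. -/
def Cone (lam : ℝ) : Set (Heis n) := {p | lam * dist (1 : Heis n) p < |yn p|}

/-- `Γ` is an intrinsic `λ`-Lipschitz graph: `(x ⬝ Cone_λ) ∩ Γ = ∅` for all `x ∈ Γ`. -/
def IsIntrinsicLipGraph (lam : ℝ) (Γ : Set (Heis n)) : Prop :=
  ∀ x ∈ Γ, ∀ c ∈ Cone (n := n) lam, x * c ∉ Γ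

end Metric

end Heis

namespace Heis

def Rw {n : ℕ} (w ν : Heis n) : Set (Heis n) :=
  {h | ∃ (s t : ℝ) (p : Heis n), p ∈ Cw w ∧ edot p p ≤ 1 ∧ |s| ≤ 1 ∧ |t| ≤ 1 ∧
    h = ⟨s • ν.x + p.x, s • ν.y + p.y, t⟩}

def Qw {n : ℕ} (w ν : Heis n) (g : Heis n) (r : ℝ) : Set (Heis n) :=
  Piw w '' ((g * ·) '' (dil r '' Rw w ν))

/-- The coordinate parametrization `ℝ^{2n+2} ≅ V₀ ⊂ ℍ_{n+1}`. -/
def embedV0 {n : ℕ} (p : (Fin (n + 1) → ℝ) × (Fin n → ℝ) × ℝ) : Heis (n + 1) :=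
  ⟨p.1, Fin.snoc p.2.1 0, p.2.2⟩

/-- The coordinates of a point of `V₀ ⊂ ℍ_{n+1}`. -/
def coordV0 {n : ℕ} (h : Heis (n + 1)) : (Fin (n + 1) → ℝ) × (Fin n → ℝ) × ℝ :=
  (h.x, fun i => h.y i.castSucc, h.z)

end Heis

section Aux
open Heis MeasureTheory

namespace HeisAux

abbrev Coords (n : ℕ) := (Fin (n + 1) → ℝ) × (Fin n → ℝ) × ℝ

variable {n : ℕ}

/-! ### General measure-theoretic lemmas on `Coords n` -/

theorem mp_form (A : Fin (n+1) → ℝ) (B : Fin n → ℝ) {φ : (Fin (n+1) → ℝ) → (Fin n → ℝ) → ℝ}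
    (hφ : Measurable fun p : (Fin (n+1) → ℝ) × (Fin n → ℝ) => φ p.1 p.2) :
    MeasurePreserving (fun p : Coords n => (p.1 + A, p.2.1 + B, p.2.2 + φ p.1 p.2.1))
      (volume : Measure (Coords n)) volume := by
  rw [show (volume : Measure (Coords n)) =
      (volume : Measure (Fin (n+1) → ℝ)).prod
        ((volume : Measure (Fin n → ℝ)).prod (volume : Measure ℝ)) from rfl]
  have inner : ∀ a : Fin (n+1) → ℝ,
      MeasurePreserving (fun q : (Fin n → ℝ) × ℝ => (q.1 + B, q.2 + φ a q.1))
        ((volume : Measure (Fin n → ℝ)).prod (volume : Measure ℝ))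
        ((volume : Measure (Fin n → ℝ)).prod (volume : Measure ℝ)) := by
    intro a
    refine (measurePreserving_add_right volume B).skew_product
      (g := fun b c => c + φ a b) ?_ ?_
    · exact (measurable_snd.add (hφ.comp (measurable_const.prodMk measurable_fst)))
    · exact Filter.Eventually.of_forall fun b =>
        (measurePreserving_add_right volume (φ a b)).map_eq
  refine (measurePreserving_add_right volume A).skew_product
    (g := fun a (q : (Fin n → ℝ) × ℝ) => (q.1 + B, q.2 + φ a q.1)) ?_ ?_
  · refine Measurable.prodMk (measurable_snd.fst.add_const B) ?_
    exact measurable_snd.snd.add (hφ.comp (measurable_fst.prodMk measurable_snd.fst))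
  · exact Filter.Eventually.of_forall fun a => (inner a).map_eq

/-- The form map as a measurable equiv. -/
def formEquiv (A : Fin (n+1) → ℝ) (B : Fin n → ℝ) (φ : (Fin (n+1) → ℝ) → (Fin n → ℝ) → ℝ)
    (hφ : Measurable fun p : (Fin (n+1) → ℝ) × (Fin n → ℝ) => φ p.1 p.2) :
    Coords n ≃ᵐ Coords n where
  toFun p := (p.1 + A, p.2.1 + B, p.2.2 + φ p.1 p.2.1)
  invFun p := (p.1 - A, p.2.1 - B, p.2.2 - φ (p.1 - A) (p.2.1 - B))
  left_inv p := by simp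
  right_inv p := by simp
  measurable_toFun := by
    refine Measurable.prodMk (measurable_fst.add_const A) (Measurable.prodMk
      (measurable_snd.fst.add_const B) ?_)
    exact measurable_snd.snd.add (hφ.comp (measurable_fst.prodMk measurable_snd.fst))
  measurable_invFun := by
    refine Measurable.prodMk (measurable_fst.sub_const A) (Measurable.prodMk
      (measurable_snd.fst.sub_const B) ?_)
    exact measurable_snd.snd.sub
      (hφ.comp ((measurable_fst.sub_const A).prodMk (measurable_snd.fst.sub_const B)))

theorem vol_image_form (A : Fin (n+1) → ℝ) (B : Fin n → ℝ)
    {φ : (Fin (n+1) → ℝ) → (Fin n → ℝ) → ℝ}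
    (hφ : Measurable fun p : (Fin (n+1) → ℝ) × (Fin n → ℝ) => φ p.1 p.2) (T : Set (Coords n)) :
    volume ((fun p : Coords n => (p.1 + A, p.2.1 + B, p.2.2 + φ p.1 p.2.1)) '' T) = volume T := by
  set e := formEquiv A B φ hφ with he
  have h1 : (fun p : Coords n => (p.1 + A, p.2.1 + B, p.2.2 + φ p.1 p.2.1)) '' T
      = e.symm ⁻¹' T := by
    rw [show (fun p : Coords n => (p.1 + A, p.2.1 + B, p.2.2 + φ p.1 p.2.1)) = ⇑e from rfl]
    exact Equiv.image_eq_preimage_symm e.toEquiv T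
  have h3 : Measure.map (⇑e.symm) volume = (volume : Measure (Coords n)) := by
    have heq : ⇑e.symm = fun p : Coords n =>
        (p.1 + -A, p.2.1 + -B, p.2.2 + -φ (p.1 + -A) (p.2.1 + -B)) := by
      funext p
      show (p.1 - A, p.2.1 - B, p.2.2 - φ (p.1 - A) (p.2.1 - B)) = _
      simp [sub_eq_add_neg]
    rw [heq]
    exact (mp_form (-A) (-B)
      (φ := fun a b => -φ (a + -A) (b + -B))
      ((hφ.comp ((measurable_fst.add_const (-A)).prodMk
        (measurable_snd.add_const (-B)))).neg)).map_eq
  rw [h1, ← MeasurableEquiv.map_apply e.symm T, h3]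

theorem det_prodMap {M N : Type*} [AddCommGroup M] [Module ℝ M] [AddCommGroup N] [Module ℝ N]
    [Module.Finite ℝ M] [Module.Free ℝ M] [Module.Finite ℝ N] [Module.Free ℝ N]
    (f : M →ₗ[ℝ] M) (g : N →ₗ[ℝ] N) :
    LinearMap.det (f.prodMap g) = LinearMap.det f * LinearMap.det g := by
  classical
  let b₁ := Module.Free.chooseBasis ℝ M
  let b₂ := Module.Free.chooseBasis ℝ N
  rw [← LinearMap.det_toMatrix (b₁.prod b₂), LinearMap.toMatrix_prodMap,
    Matrix.det_fromBlocks_zero₂₁, LinearMap.det_toMatrix, LinearMap.det_toMatrix]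

instance : (volume : Measure (Coords n)).IsAddHaarMeasure := by
  haveI h1 : ((volume : Measure (Fin n → ℝ)).prod (volume : Measure ℝ)).IsAddHaarMeasure :=
    inferInstance
  exact Measure.prod.instIsAddHaarMeasure _ _

/-- The dilation in coordinates. -/
def Dr (r : ℝ) (p : Coords n) : Coords n := (r • p.1, r • p.2.1, r ^ 2 * p.2.2)

theorem vol_Dr_image (r : ℝ) (hr : 0 < r) (T : Set (Coords n)) :
    volume (Dr r '' T) = ENNReal.ofReal (r ^ (2 * n + 3)) * volume T := by
  set f : Coords n →ₗ[ℝ] Coords n :=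
    (r • (LinearMap.id : (Fin (n+1) → ℝ) →ₗ[ℝ] _)).prodMap
      ((r • (LinearMap.id : (Fin n → ℝ) →ₗ[ℝ] _)).prodMap
        ((r ^ 2) • (LinearMap.id : ℝ →ₗ[ℝ] ℝ))) with hf
  have hfun : (Dr r : Coords n → Coords n) = ⇑f := by
    funext p
    simp [Dr, hf, LinearMap.prodMap_apply, smul_eq_mul]
  have hdet : LinearMap.det f = r ^ (2 * n + 3) := by
    rw [hf, det_prodMap, det_prodMap]
    simp only [LinearMap.det_smul, LinearMap.det_id, Module.finrank_fin_fun,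
      Module.finrank_self, mul_one]
    ring
  rw [hfun, Measure.addHaar_image_linearMap, hdet, abs_of_pos (pow_pos hr _)]

/-! ### Heisenberg-specific lemmas -/

theorem yn_eq (h : Heis (n+1)) : yn h = h.y (Fin.last n) := by
  rw [yn, dif_neg (Nat.succ_ne_zero n)]; rfl

theorem yn_mul (g h : Heis (n+1)) : yn (g * h) = yn g + yn h := by
  simp [yn_eq, mul_def]

theorem yn_dil (t : ℝ) (h : Heis (n+1)) : yn (dil t h) = t * yn h := by
  simp [yn_eq, dil]

theorem yn_embedV0 (p : Coords n) : yn (embedV0 p) = 0 := by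
  simp [yn_eq, embedV0]

theorem coordV0_embedV0 (p : Coords n) : coordV0 (embedV0 p) = p := by
  refine Prod.ext rfl (Prod.ext ?_ rfl)
  funext i
  simp [coordV0, embedV0]

theorem embedV0_coordV0 {h : Heis (n+1)} (hy : yn h = 0) : embedV0 (coordV0 h) = h := by
  refine Heis.ext rfl ?_ rfl
  funext j
  refine Fin.lastCases ?_ (fun i => ?_) j
  · show (Fin.snoc (fun i => h.y i.castSucc) 0 : Fin (n+1) → ℝ) (Fin.last n) = h.y (Fin.last n)
    rw [Fin.snoc_last, ← yn_eq, hy]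
  · show (Fin.snoc (fun i => h.y i.castSucc) 0 : Fin (n+1) → ℝ) i.castSucc = h.y i.castSucc
    rw [Fin.snoc_castSucc]

theorem yn_Piw (w : Heis (n+1)) (hwy : yn w = 1) (h : Heis (n+1)) : yn (Piw w h) = 0 := by
  simp [Piw, wpow, yn_mul, yn_dil, hwy]

theorem coordV0_dil (r : ℝ) (h : Heis (n+1)) : coordV0 (dil r h) = Dr r (coordV0 h) := by
  refine Prod.ext rfl (Prod.ext ?_ rfl)
  funext i
  simp [coordV0, dil, Dr]

theorem embedV0_Dr (r : ℝ) (p : Coords n) : embedV0 (Dr r p) = dil r (embedV0 p) := by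
  refine Heis.ext rfl ?_ rfl
  funext j
  refine Fin.lastCases ?_ (fun i => ?_) j
  · show (Fin.snoc (r • p.2.1) 0 : Fin (n+1) → ℝ) (Fin.last n) = _
    simp [Fin.snoc_last, embedV0, dil]
  · show (Fin.snoc (r • p.2.1) 0 : Fin (n+1) → ℝ) i.castSucc = _
    simp [Fin.snoc_castSucc, embedV0, dil]

theorem measurable_snoc_aux :
    Measurable fun b : Fin n → ℝ => (Fin.snoc b (0:ℝ) : Fin (n+1) → ℝ) := by
  apply measurable_pi_lambda
  intro i
  refine Fin.lastCases ?_ (fun j => ?_) i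
  · simp only [Fin.snoc_last]; exact measurable_const
  · simp only [Fin.snoc_castSucc]; exact measurable_pi_apply j

theorem continuous_snoc_aux :
    Continuous fun b : Fin n → ℝ => (Fin.snoc b (0:ℝ) : Fin (n+1) → ℝ) := by
  apply continuous_pi
  intro i
  refine Fin.lastCases ?_ (fun j => ?_) i
  · simp only [Fin.snoc_last]; exact continuous_const
  · simp only [Fin.snoc_castSucc]; exact continuous_apply j

theorem Om_sub_left (x1 x2 y1 y2 : Fin (n+1) → ℝ) (v : (Fin (n+1) → ℝ) × (Fin (n+1) → ℝ)) :
    Om (x1 - x2, y1 - y2) v = Om (x1, y1) v - Om (x2, y2) v := by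
  simp only [Om, Pi.sub_apply]
  rw [← Finset.sum_sub_distrib]
  exact Finset.sum_congr rfl fun i _ => by ring

theorem Om_smul_left (s : ℝ) (x y : Fin (n+1) → ℝ) (v : (Fin (n+1) → ℝ) × (Fin (n+1) → ℝ)) :
    Om (s • x, s • y) v = s * Om (x, y) v := by
  simp only [Om, Pi.smul_apply, smul_eq_mul, Finset.mul_sum]
  exact Finset.sum_congr rfl fun i _ => by ring

variable (w ν : Heis (n+1))

/-- Decomposition of `x ↦ Π_w(gx)` in coordinates as a shear map. -/
theorem G_decomp (hwy : yn w = 1) (g : Heis (n+1)) :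
    ∃ (A : Fin (n+1) → ℝ) (B : Fin n → ℝ) (φ : (Fin (n+1) → ℝ) → (Fin n → ℝ) → ℝ),
      (Measurable fun p : (Fin (n+1) → ℝ) × (Fin n → ℝ) => φ p.1 p.2) ∧
      (fun p : Coords n => coordV0 (Piw w (g * embedV0 p)))
        = fun p : Coords n => (p.1 + A, p.2.1 + B, p.2.2 + φ p.1 p.2.1) := by
  set t : ℝ := -(yn g) with ht
  refine ⟨g.x + t • w.x, fun i => g.y i.castSucc + t * w.y i.castSucc,
    fun a b => g.z + Om (pr g) (a, Fin.snoc b 0) / 2 + t ^ 2 * w.z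
      + Om (g.x + a, g.y + Fin.snoc b 0) (t • w.x, t • w.y) / 2, ?_, ?_⟩
  · -- measurability
    have hs : Measurable fun p : (Fin (n+1) → ℝ) × (Fin n → ℝ) =>
        (Fin.snoc p.2 (0:ℝ) : Fin (n+1) → ℝ) := measurable_snoc_aux.comp measurable_snd
    refine ((measurable_const.add ?_).add measurable_const).add ?_
    · apply Measurable.div_const
      simp only [Om, pr]
      apply Finset.measurable_sum
      intro i _
      exact (measurable_const.mul ((measurable_pi_apply i).comp hs)).sub
        (((measurable_pi_apply i).comp measurable_fst).mul measurable_const)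
    · apply Measurable.div_const
      simp only [Om]
      apply Finset.measurable_sum
      intro i _
      refine Measurable.sub ?_ ?_
      · exact (measurable_const.add ((measurable_pi_apply i).comp measurable_fst)).mul
          measurable_const
      · exact measurable_const.mul
          (measurable_const.add ((measurable_pi_apply i).comp hs))
  · -- the function equality
    funext p
    obtain ⟨a, b, c⟩ := p
    have h1 : yn (g * embedV0 (a, b, c)) = yn g := by
      rw [yn_mul, yn_embedV0, add_zero]
    show coordV0 (Piw w (g * embedV0 (a, b, c))) = _
    rw [Piw, h1]
    refine Prod.ext ?_ (Prod.ext ?_ ?_)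
    · funext i
      simp only [coordV0, wpow, dil, mul_def, embedV0, Pi.add_apply, Pi.smul_apply,
        smul_eq_mul, ht]
      ring
    · funext i
      simp only [coordV0, wpow, dil, mul_def, embedV0, Pi.add_apply, Pi.smul_apply,
        smul_eq_mul, Fin.snoc_castSucc, ht]
      ring
    · simp only [coordV0, wpow, dil, mul_def, embedV0, pr, ht]
      ring

theorem yn_Rw {h : Heis (n+1)} (hν0 : ν ∈ V0 (n+1)) (hh : h ∈ Rw w ν) : yn h = 0 := by
  obtain ⟨s, t, p, hp, -, -, -, rfl⟩ := hh
  have h1 : ν.y (Fin.last n) = 0 := by rw [← yn_eq]; exact hν0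
  have h2 : p.y (Fin.last n) = 0 := by rw [← yn_eq]; exact hp.2.1
  simp [yn_eq, Pi.add_apply, Pi.smul_apply, h1, h2]

theorem preQw_eq (hwy : yn w = 1) (hν0 : ν ∈ V0 (n+1)) (g : Heis (n+1)) (r : ℝ) :
    embedV0 ⁻¹' Qw w ν g r
      = (fun p : Coords n => coordV0 (Piw w (g * embedV0 p))) ''
          (embedV0 ⁻¹' (dil r '' Rw w ν)) := by
  ext v
  simp only [Set.mem_preimage, Set.mem_image, Qw]
  constructor
  · rintro ⟨x2, ⟨x1, ⟨h', hh', rfl⟩, rfl⟩, hv⟩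
    have hy : yn (dil r h') = 0 := by rw [yn_dil, yn_Rw w ν hν0 hh', mul_zero]
    refine ⟨coordV0 (dil r h'), ?_, ?_⟩
    · rw [embedV0_coordV0 hy]
      exact ⟨h', hh', rfl⟩
    · rw [embedV0_coordV0 hy, hv, coordV0_embedV0]
  · rintro ⟨u, hu, rfl⟩
    refine ⟨g * embedV0 u, ⟨embedV0 u, hu, rfl⟩, ?_⟩
    rw [embedV0_coordV0 (yn_Piw w hwy _)]

theorem preDil_eq (hν0 : ν ∈ V0 (n+1)) (r : ℝ) :
    embedV0 ⁻¹' (dil r '' Rw w ν) = Dr r '' (embedV0 ⁻¹' Rw w ν) := by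
  ext v
  simp only [Set.mem_preimage, Set.mem_image]
  constructor
  · rintro ⟨h', hh', hv⟩
    have hy : yn h' = 0 := yn_Rw w ν hν0 hh'
    refine ⟨coordV0 h', by rw [embedV0_coordV0 hy]; exact hh', ?_⟩
    rw [← coordV0_dil, hv, coordV0_embedV0]
  · rintro ⟨u, hu, rfl⟩
    exact ⟨embedV0 u, hu, (embedV0_Dr r u).symm⟩

/-! ### Positivity and finiteness of the measure of `R_w` in coordinates -/

/-- The linear functional `Ω̄(·, w)` in coordinates of the horizontal part of `V₀`. -/
def lfun (q : (Fin (n+1) → ℝ) × (Fin n → ℝ)) : ℝ :=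
  (∑ i, q.1 i * w.y i) - ∑ j : Fin n, w.x j.castSucc * q.2 j

theorem Om_snoc_eq (x : Fin (n+1) → ℝ) (y' : Fin n → ℝ) :
    Om (x, Fin.snoc y' 0) (pr w) = lfun w (x, y') := by
  simp only [Om, pr, lfun]
  rw [Finset.sum_sub_distrib]
  congr 1
  rw [Fin.sum_univ_castSucc]
  simp [Fin.snoc_castSucc, Fin.snoc_last]

/-- The coefficient of `ν` in the decomposition of a horizontal vector of `V₀`. -/
def sfun (q : (Fin (n+1) → ℝ) × (Fin n → ℝ)) : ℝ := lfun w q / Obar ν w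

/-- The component in `C_w` in the decomposition of a horizontal vector of `V₀`. -/
def pvec (q : (Fin (n+1) → ℝ) × (Fin n → ℝ)) : Heis (n+1) :=
  ⟨q.1 - sfun w ν q • ν.x, Fin.snoc q.2 0 - sfun w ν q • ν.y, 0⟩

theorem continuous_lfun : Continuous (lfun w (n := n)) := by
  apply Continuous.sub
  · apply continuous_finset_sum
    intro i _
    exact ((continuous_apply i).comp continuous_fst).mul continuous_const
  · apply continuous_finset_sum
    intro j _
    exact continuous_const.mul ((continuous_apply j).comp continuous_snd)

theorem continuous_sfun : Continuous (sfun w ν (n := n)) :=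
  (continuous_lfun w).div_const _

theorem continuous_efun :
    Continuous fun q : (Fin (n+1) → ℝ) × (Fin n → ℝ) =>
      edot (pvec w ν q) (pvec w ν q) := by
  have hs := continuous_sfun w ν (n := n)
  have hsnoc : Continuous fun q : (Fin (n+1) → ℝ) × (Fin n → ℝ) =>
      (Fin.snoc q.2 (0:ℝ) : Fin (n+1) → ℝ) := continuous_snoc_aux.comp continuous_snd
  apply Continuous.add
  · apply continuous_finset_sum
    intro i _
    have h1 : Continuous fun q : (Fin (n+1) → ℝ) × (Fin n → ℝ) =>
        (pvec w ν q).x i := by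
      simp only [pvec, Pi.sub_apply, Pi.smul_apply, smul_eq_mul]
      exact ((continuous_apply i).comp continuous_fst).sub (hs.mul continuous_const)
    exact h1.mul h1
  · apply continuous_finset_sum
    intro i _
    have h1 : Continuous fun q : (Fin (n+1) → ℝ) × (Fin n → ℝ) =>
        (pvec w ν q).y i := by
      simp only [pvec, Pi.sub_apply, Pi.smul_apply, smul_eq_mul]
      exact (((continuous_apply i).comp hsnoc)).sub (hs.mul continuous_const)
    exact h1.mul h1

theorem mem_Rw_of (hν0 : ν ∈ V0 (n+1)) (hL : Obar ν w ≠ 0)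
    (a : Fin (n+1) → ℝ) (b : Fin n → ℝ) (c : ℝ)
    (h1 : |sfun w ν (a, b)| ≤ 1) (h2 : edot (pvec w ν (a, b)) (pvec w ν (a, b)) ≤ 1)
    (h3 : |c| ≤ 1) : embedV0 (a, b, c) ∈ Rw w ν := by
  have hνy : ν.y (Fin.last n) = 0 := by rw [← yn_eq]; exact hν0
  refine ⟨sfun w ν (a, b), c, pvec w ν (a, b), ⟨rfl, ?_, ?_⟩, h2, h1, h3, ?_⟩
  · -- yn (pvec) = 0
    simp [yn_eq, pvec, Fin.snoc_last, hνy]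
  · -- Obar (pvec) w = 0
    show Om (pr (pvec w ν (a, b))) (pr w) = 0
    have : pr (pvec w ν (a, b))
        = (a - sfun w ν (a, b) • ν.x, Fin.snoc b 0 - sfun w ν (a, b) • ν.y) := rfl
    rw [this, Om_sub_left, Om_smul_left, Om_snoc_eq]
    have hOb : Om (ν.x, ν.y) (pr w) = Obar ν w := rfl
    rw [hOb, sfun, div_mul_cancel₀ _ hL, sub_self]
  · -- the structure equality
    refine Heis.ext ?_ ?_ rfl
    · show a = sfun w ν (a, b) • ν.x + (a - sfun w ν (a, b) • ν.x)
      abel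
    · show (Fin.snoc b 0 : Fin (n+1) → ℝ)
        = sfun w ν (a, b) • ν.y + (Fin.snoc b 0 - sfun w ν (a, b) • ν.y)
      abel

theorem lfun_zero : lfun w (0 : (Fin (n+1) → ℝ) × (Fin n → ℝ)) = 0 := by
  simp [lfun]

theorem sfun_zero : sfun w ν (0 : (Fin (n+1) → ℝ) × (Fin n → ℝ)) = 0 := by
  rw [sfun, lfun_zero, zero_div]

theorem edot_pvec_zero :
    edot (pvec w ν (0 : (Fin (n+1) → ℝ) × (Fin n → ℝ)))
      (pvec w ν (0 : (Fin (n+1) → ℝ) × (Fin n → ℝ))) = 0 := by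
  have hsz := sfun_zero w ν (n := n)
  have hsnoc0 : (Fin.snoc (0 : Fin n → ℝ) (0:ℝ) : Fin (n+1) → ℝ) = 0 := by
    funext i
    refine Fin.lastCases ?_ (fun j => ?_) i
    · simp [Fin.snoc_last]
    · simp [Fin.snoc_castSucc]
  simp [edot, pvec, hsz, hsnoc0]

theorem sq_le_edot_x (h : Heis (n+1)) (i : Fin (n+1)) : h.x i * h.x i ≤ edot h h := by
  have h1 : h.x i * h.x i ≤ ∑ j, h.x j * h.x j :=
    Finset.single_le_sum (fun j _ => mul_self_nonneg (h.x j)) (Finset.mem_univ i)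
  have h2 : (0:ℝ) ≤ ∑ j, h.y j * h.y j :=
    Finset.sum_nonneg fun j _ => mul_self_nonneg (h.y j)
  calc h.x i * h.x i ≤ ∑ j, h.x j * h.x j := h1
    _ ≤ ∑ j, h.x j * h.x j + ∑ j, h.y j * h.y j := le_add_of_nonneg_right h2
    _ = edot h h := rfl

theorem sq_le_edot_y (h : Heis (n+1)) (i : Fin (n+1)) : h.y i * h.y i ≤ edot h h := by
  have h1 : h.y i * h.y i ≤ ∑ j, h.y j * h.y j :=
    Finset.single_le_sum (fun j _ => mul_self_nonneg (h.y j)) (Finset.mem_univ i)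
  have h2 : (0:ℝ) ≤ ∑ j, h.x j * h.x j :=
    Finset.sum_nonneg fun j _ => mul_self_nonneg (h.x j)
  calc h.y i * h.y i ≤ ∑ j, h.y j * h.y j := h1
    _ ≤ ∑ j, h.x j * h.x j + ∑ j, h.y j * h.y j := le_add_of_nonneg_left h2
    _ = edot h h := rfl

end HeisAux

end Aux
open scoped ENNReal
open Heis MeasureTheory in
/-- The map `x ↦ Π_w(gx)`, read in the coordinates of
`V₀ ≅ ℝ^{2n+2} ⊂ ℍ_{n+1}`, preserves Lebesgue measure, for every `g` and every
horizontal `w` with `y_n(w) = 1`.  Consequently the Lebesgue measure of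
`Q_w(g,r) = Π_w(g δ_r(R_w))` equals that of `δ_r(R_w)` and is comparable to
`r^{2(n+1)+1}`, independently of `g`. -/
theorem Piw_measure_preserving_and_Qw_volume {n : ℕ}
    (w : Heis (n + 1)) (hw : IsHoriz w) (hwy : yn w = 1)
    (ν : Heis (n + 1)) (hν : IsHoriz ν) (hν0 : ν ∈ V0 (n + 1)) (hν1 : edot ν ν = 1)
    (hνC : ∀ p ∈ Cw w, edot ν p = 0) :
    (∀ g : Heis (n + 1),
      MeasurePreserving (fun v => coordV0 (Piw w (g * embedV0 v)))
        (volume : Measure ((Fin (n + 1) → ℝ) × (Fin n → ℝ) × ℝ)) volume) ∧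
    (∀ (g : Heis (n + 1)) (r : ℝ), 0 < r →
      volume (embedV0 ⁻¹' Qw w ν g r) = volume (embedV0 ⁻¹' (dil r '' Rw w ν))) ∧
    (∃ C : ℝ≥0∞, 1 ≤ C ∧ C ≠ ⊤ ∧
      ∀ (g : Heis (n + 1)) (r : ℝ), 0 < r →
        C⁻¹ * ENNReal.ofReal (r ^ (2 * (n + 1) + 1)) ≤ volume (embedV0 ⁻¹' Qw w ν g r) ∧
        volume (embedV0 ⁻¹' Qw w ν g r) ≤ C * ENNReal.ofReal (r ^ (2 * (n + 1) + 1))) := by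
  classical
  have part1 : ∀ g : Heis (n + 1),
      MeasurePreserving (fun v => coordV0 (Piw w (g * embedV0 v)))
        (volume : Measure ((Fin (n + 1) → ℝ) × (Fin n → ℝ) × ℝ)) volume := by
    intro g
    obtain ⟨A, B, φ, hφ, hEq⟩ := HeisAux.G_decomp w hwy g
    rw [show (fun v => coordV0 (Piw w (g * embedV0 v))) = _ from hEq]
    exact HeisAux.mp_form A B hφ
  have part2 : ∀ (g : Heis (n + 1)) (r : ℝ),
      volume (embedV0 ⁻¹' Qw w ν g r) = volume (embedV0 ⁻¹' (dil r '' Rw w ν)) := by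
    intro g r
    obtain ⟨A, B, φ, hφ, hEq⟩ := HeisAux.G_decomp w hwy g
    rw [HeisAux.preQw_eq w ν hwy hν0 g r, hEq, HeisAux.vol_image_form A B hφ]
  refine ⟨part1, fun g r _ => part2 g r, ?_⟩
  set V := volume (embedV0 ⁻¹' Rw w ν) with hV
  have hL : Obar ν w ≠ 0 := by
    intro h0
    have h1 : edot ν ν = 0 := hνC ν ⟨hν, hν0, h0⟩
    rw [hν1] at h1
    exact one_ne_zero h1
  have hVpos : 0 < V := by
    set U : Set (HeisAux.Coords n) :=
      {p | |HeisAux.sfun w ν (p.1, p.2.1)| < 1} ∩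
      ({p | edot (HeisAux.pvec w ν (p.1, p.2.1)) (HeisAux.pvec w ν (p.1, p.2.1)) < 1} ∩
       {p | |p.2.2| < 1}) with hU
    have hUopen : IsOpen U := by
      have hc : Continuous fun p : HeisAux.Coords n =>
          ((p.1, p.2.1) : (Fin (n+1) → ℝ) × (Fin n → ℝ)) :=
        continuous_fst.prodMk continuous_snd.fst
      refine IsOpen.inter ?_ (IsOpen.inter ?_ ?_)
      · exact isOpen_lt
          (continuous_abs.comp ((HeisAux.continuous_sfun w ν).comp hc)) continuous_const
      · exact isOpen_lt ((HeisAux.continuous_efun w ν).comp hc) continuous_const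
      · exact isOpen_lt (continuous_abs.comp continuous_snd.snd) continuous_const
    have hU0 : (0 : HeisAux.Coords n) ∈ U := by
      refine ⟨?_, ?_, ?_⟩
      · show |HeisAux.sfun w ν (0 : (Fin (n+1) → ℝ) × (Fin n → ℝ))| < 1
        rw [HeisAux.sfun_zero]
        norm_num
      · show edot (HeisAux.pvec w ν (0 : (Fin (n+1) → ℝ) × (Fin n → ℝ)))
          (HeisAux.pvec w ν (0 : (Fin (n+1) → ℝ) × (Fin n → ℝ))) < 1
        rw [HeisAux.edot_pvec_zero]
        norm_num
      · show |(0:ℝ)| < 1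
        norm_num
    have hUsub : U ⊆ embedV0 ⁻¹' Rw w ν := by
      rintro p ⟨h1, h2, h3⟩
      exact HeisAux.mem_Rw_of w ν hν0 hL p.1 p.2.1 p.2.2 h1.le h2.le h3.le
    calc (0:ℝ≥0∞) < volume U := hUopen.measure_pos volume ⟨0, hU0⟩
      _ ≤ V := measure_mono hUsub
  have hVfin : V < ⊤ := by
    set Box : Set (HeisAux.Coords n) :=
      (Set.univ.pi fun _ : Fin (n+1) => Set.Icc (-2:ℝ) 2) ×ˢ
      ((Set.univ.pi fun _ : Fin n => Set.Icc (-2:ℝ) 2) ×ˢ Set.Icc (-1:ℝ) 1) with hBox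
    have habs : ∀ (h : Heis (n+1)), edot h h ≤ 1 →
        (∀ i, |h.x i| ≤ 1) ∧ (∀ i, |h.y i| ≤ 1) := by
      intro h hh
      constructor
      · intro i
        exact abs_le_one_iff_mul_self_le_one.2 (le_trans (HeisAux.sq_le_edot_x h i) hh)
      · intro i
        exact abs_le_one_iff_mul_self_le_one.2 (le_trans (HeisAux.sq_le_edot_y h i) hh)
    have hsub : embedV0 ⁻¹' Rw w ν ⊆ Box := by
      intro v hv
      obtain ⟨s, t, p, hp, hpe, hs, ht, heq⟩ := hv
      have hνb := habs ν hν1.le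
      have hpb := habs p hpe
      have hx : ∀ i, v.1 i = s * ν.x i + p.x i := by
        intro i
        have h1 : (embedV0 v).x = s • ν.x + p.x := congrArg Heis.x heq
        have h2 := congrFun h1 i
        simpa [embedV0] using h2
      have hy : ∀ i : Fin n, v.2.1 i = s * ν.y i.castSucc + p.y i.castSucc := by
        intro i
        have h1 : (embedV0 v).y = s • ν.y + p.y := congrArg Heis.y heq
        have h2 := congrFun h1 i.castSucc
        have h3 : (embedV0 v).y i.castSucc = v.2.1 i := by
          show (Fin.snoc v.2.1 0 : Fin (n+1) → ℝ) i.castSucc = v.2.1 i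
          rw [Fin.snoc_castSucc]
        rw [h3] at h2
        simpa using h2
      have hz : v.2.2 = t := congrArg Heis.z heq
      have hbnd : ∀ (a b : ℝ), |a| ≤ 1 → |b| ≤ 1 → |s * a + b| ≤ 2 := by
        intro a b ha hb
        calc |s * a + b| ≤ |s * a| + |b| := abs_add_le _ _
          _ = |s| * |a| + |b| := by rw [abs_mul]
          _ ≤ 1 * 1 + 1 := by gcongr
          _ = 2 := by norm_num
      refine ⟨?_, ?_, ?_⟩
      · intro i _
        have := hbnd (ν.x i) (p.x i) (hνb.1 i) (hpb.1 i)
        rw [← hx i] at this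
        exact Set.mem_Icc.2 (abs_le.1 this)
      · intro i _
        have := hbnd (ν.y i.castSucc) (p.y i.castSucc) (hνb.2 _) (hpb.2 _)
        rw [← hy i] at this
        exact Set.mem_Icc.2 (abs_le.1 this)
      · rw [hz]
        exact Set.mem_Icc.2 (abs_le.1 ht)
    have hBoxfin : volume Box < ⊤ :=
      IsCompact.measure_lt_top
        ((isCompact_univ_pi fun _ => isCompact_Icc).prod
          ((isCompact_univ_pi fun _ => isCompact_Icc).prod isCompact_Icc))
    exact lt_of_le_of_lt (measure_mono hsub) hBoxfin
  have hval : ∀ (g : Heis (n+1)) (r : ℝ), 0 < r →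
      volume (embedV0 ⁻¹' Qw w ν g r) = ENNReal.ofReal (r ^ (2 * n + 3)) * V := by
    intro g r hr
    rw [part2 g r, HeisAux.preDil_eq w ν hν0 r, HeisAux.vol_Dr_image r hr]
  have hexp : ∀ r : ℝ, r ^ (2 * (n + 1) + 1) = r ^ (2 * n + 3) := fun r => by ring
  refine ⟨max 1 (max V V⁻¹), le_max_left _ _, ?_, ?_⟩
  · exact (max_lt ENNReal.one_lt_top (max_lt hVfin (ENNReal.inv_lt_top.2 hVpos))).ne
  · intro g r hr
    rw [hval g r hr, hexp r]
    constructor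
    · rw [mul_comm (ENNReal.ofReal (r ^ (2 * n + 3))) V]
      refine mul_le_mul_left ?_ _
      have h1 : V⁻¹ ≤ max 1 (max V V⁻¹) := le_trans (le_max_right V V⁻¹) (le_max_right _ _)
      calc (max 1 (max V V⁻¹))⁻¹ ≤ (V⁻¹)⁻¹ := ENNReal.inv_le_inv.2 h1
        _ = V := inv_inv V
    · rw [mul_comm (ENNReal.ofReal (r ^ (2 * n + 3))) V]
      exact mul_le_mul_left
        (le_trans (le_max_left V V⁻¹) (le_max_right _ _)) _
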